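/- In the symmetric Gaussian primitive relay channel bound, for any P, N > 0 and R₀ ≥ 0, the value min{ (1/2)log₂(1+2P/N), min over a ∈ [0,R₀] of max((1/2)log₂(1+P/N)+R₀−a, (1/2)log₂(1+P/N)+a+√(2a ln2)·log₂ e) } is strictly less than min{ (1/2)log₂(1+2P/N), (1/2)log₂(1+P/N)+R₀ } whenever R₀ > 0 and (1/2)log₂(1+P/N)+R₀ < (1/2)log₂(1+2P/N); i.e., the new bound strictly improves the cut-set bound whenever the multiple-access cut is active. -/

import Mathlib

/-- The new bound strictly improves the cut-set bound whenever `R₀ > 0` and the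
multiple-access cut is active. -/
theorem new_bound_strictly_improves (P N R₀ : ℝ) (hP : 0 < P) (hN : 0 < N) (hR₀ : 0 < R₀)
    (hactive : (1/2) * Real.logb 2 (1 + P / N) + R₀ < (1/2) * Real.logb 2 (1 + 2 * P / N)) :
    min ((1/2) * Real.logb 2 (1 + 2 * P / N))
        (sInf ((fun a : ℝ =>
          max ((1/2) * Real.logb 2 (1 + P / N) + R₀ - a)
            ((1/2) * Real.logb 2 (1 + P / N) + a +
              Real.sqrt (2 * a * Real.log 2) * Real.logb 2 (Real.exp 1))) '' Set.Icc 0 R₀))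
      < min ((1/2) * Real.logb 2 (1 + 2 * P / N))
          ((1/2) * Real.logb 2 (1 + P / N) + R₀) := by
  set C := (1/2) * Real.logb 2 (1 + P / N) with hC
  set S := ((fun a : ℝ =>
          max (C + R₀ - a)
            (C + a + Real.sqrt (2 * a * Real.log 2) * Real.logb 2 (Real.exp 1))) ''
        Set.Icc 0 R₀) with hS
  have hlog2 : (0:ℝ) < Real.log 2 := Real.log_pos (by norm_num)
  set a₀ : ℝ := min (R₀ / 4) (R₀ ^ 2 * Real.log 2 / 32) with ha₀
  have ha₀pos : 0 < a₀ := lt_min (by linarith) (by positivity)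
  have ha₀le : a₀ ≤ R₀ / 4 := min_le_left _ _
  have ha₀mem : a₀ ∈ Set.Icc (0:ℝ) R₀ := ⟨le_of_lt ha₀pos, by linarith⟩
  have hlogb : Real.logb 2 (Real.exp 1) = 1 / Real.log 2 := by
    rw [Real.logb, Real.log_exp]
  have hsqrt : Real.sqrt (2 * a₀ * Real.log 2) ≤ R₀ * Real.log 2 / 4 := by
    have h2 : a₀ ≤ R₀ ^ 2 * Real.log 2 / 32 := min_le_right _ _
    have h1 : 2 * a₀ * Real.log 2 ≤ (R₀ * Real.log 2 / 4) ^ 2 := by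
      nlinarith [hlog2, sq_nonneg R₀]
    calc Real.sqrt (2 * a₀ * Real.log 2) ≤ Real.sqrt ((R₀ * Real.log 2 / 4) ^ 2) :=
          Real.sqrt_le_sqrt h1
      _ = R₀ * Real.log 2 / 4 := Real.sqrt_sq (by positivity)
  have hmaxlt : max (C + R₀ - a₀)
      (C + a₀ + Real.sqrt (2 * a₀ * Real.log 2) * Real.logb 2 (Real.exp 1)) < C + R₀ := by
    apply max_lt
    · linarith
    · have hterm : Real.sqrt (2 * a₀ * Real.log 2) * Real.logb 2 (Real.exp 1) ≤ R₀ / 4 := by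
        rw [hlogb]
        have := mul_le_mul_of_nonneg_right hsqrt
          (le_of_lt (by positivity : (0:ℝ) < (1 / Real.log 2)))
        calc Real.sqrt (2 * a₀ * Real.log 2) * (1 / Real.log 2)
            ≤ (R₀ * Real.log 2 / 4) * (1 / Real.log 2) := this
          _ = R₀ / 4 := by field_simp
      linarith
  have hmem : max (C + R₀ - a₀)
      (C + a₀ + Real.sqrt (2 * a₀ * Real.log 2) * Real.logb 2 (Real.exp 1)) ∈ S :=
    ⟨a₀, ha₀mem, rfl⟩
  have hbdd : BddBelow S := by
    refine ⟨C, ?_⟩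
    rintro x ⟨a, ⟨ha0, haR⟩, rfl⟩
    calc C ≤ C + R₀ - a := by linarith
      _ ≤ _ := le_max_left _ _
  have hsinf : sInf S < C + R₀ := lt_of_le_of_lt (csInf_le hbdd hmem) hmaxlt
  have hRHS : min ((1/2) * Real.logb 2 (1 + 2 * P / N)) (C + R₀) = C + R₀ :=
    min_eq_right (le_of_lt hactive)
  rw [hRHS]
  exact lt_of_le_of_lt (min_le_right _ _) hsinf
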